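/- Let m ≥ 1 be an integer and let f : ℝ → ℝ be m-times continuously differentiable on an open interval containing the point a. For h > 0 let d(h) ∈ ℝ^m be the unique vector satisfying the linear system Σ_{k=0}^{m−1} ((jh)^k / k!) · d_k(h) = f(a + jh) for j = 0, 1, …, m−1. Then there exist constants C > 0 and h₀ > 0 such that for all 0 < h < h₀ and all k = 0, 1, …, m−1, |d_k(h) − f^{(k)}(a)| ≤ C · h^{m−k}. -/

import Mathlib

open Set Matrix

private lemma tv_aux_det (m : ℕ) :
    (Matrix.of fun j k : Fin m =>
      ((j:ℝ))^(k:ℕ) / ((Nat.factorial (k:ℕ) : ℝ))).det ≠ 0 := by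
  have hW : (Matrix.of fun j k : Fin m => ((j:ℝ))^(k:ℕ) / ((Nat.factorial (k:ℕ) : ℝ))) =
      Matrix.vandermonde (fun j : Fin m => (j:ℝ)) *
        Matrix.diagonal (fun k : Fin m => ((Nat.factorial (k:ℕ) : ℝ))⁻¹) := by
    ext j k
    simp [Matrix.mul_diagonal, Matrix.vandermonde, div_eq_mul_inv]
  rw [hW, Matrix.det_mul, Matrix.det_diagonal]
  refine mul_ne_zero ?_ ?_
  · rw [Matrix.det_vandermonde_ne_zero_iff]
    intro i j hij
    exact Fin.ext (Nat.cast_injective hij)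
  · exact Finset.prod_ne_zero_iff.2 fun k _ => inv_ne_zero (by positivity)

/-- if `f` is `m`-times continuously differentiable on an open interval
containing `a`, and for small `h > 0` the vector `d(h)` solves the Taylor–Vandermonde
system `∑_{k<m} ((jh)^k/k!) d_k = f(a + jh)` for `j = 0,…,m−1`, then each component
satisfies `|d_k(h) − f^{(k)}(a)| ≤ C h^{m−k}`. -/
theorem taylor_vandermonde_boundary_derivatives (m : ℕ) (hm : 1 ≤ m) (f : ℝ → ℝ)
    (a α β : ℝ) (ha : a ∈ Set.Ioo α β) (hf : ContDiffOn ℝ m f (Set.Ioo α β)) :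
    ∃ C > (0:ℝ), ∃ h₀ > (0:ℝ), ∀ h : ℝ, 0 < h → h < h₀ →
      ∀ d : Fin m → ℝ,
        (∀ j : Fin m,
          ∑ k : Fin m, ((j : ℝ) * h) ^ (k : ℕ) / (Nat.factorial (k : ℕ)) * d k
            = f (a + (j : ℝ) * h)) →
        ∀ k : Fin m,
          |d k - iteratedDerivWithin (k : ℕ) f (Set.Ioo α β) a|
            ≤ C * h ^ (m - (k : ℕ)) := by
  have hαa : α < a := ha.1
  have haβ : a < β := ha.2
  have hmR : (0:ℝ) < (m:ℝ) := by exact_mod_cast hm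
  set b : ℝ := (a + β) / 2 with hbdef
  have hab : a < b := by rw [hbdef]; linarith
  have hbβ : b < β := by rw [hbdef]; linarith
  have hsub : Set.Icc a b ⊆ Set.Ioo α β :=
    fun x hx => ⟨lt_of_lt_of_le hαa hx.1, lt_of_le_of_lt hx.2 hbβ⟩
  have hm1 : m - 1 + 1 = m := Nat.succ_pred_eq_of_pos hm
  -- iterated derivatives on Icc a b and Ioo α β agree at a
  have hg : ∀ k : ℕ, k ≤ m →
      iteratedDerivWithin k f (Set.Icc a b) a = iteratedDerivWithin k f (Set.Ioo α β) a := by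
    intro k hk
    have hp := hf.ftaylorSeriesWithin isOpen_Ioo.uniqueDiffOn
    have e1 := hp.eq_iteratedFDerivWithin_of_uniqueDiffOn (by exact_mod_cast hk)
      isOpen_Ioo.uniqueDiffOn ha
    have e2 := (hp.mono hsub).eq_iteratedFDerivWithin_of_uniqueDiffOn (by exact_mod_cast hk)
      (uniqueDiffOn_Icc hab) (Set.left_mem_Icc.2 hab.le)
    rw [iteratedDerivWithin_eq_iteratedFDerivWithin,
      iteratedDerivWithin_eq_iteratedFDerivWithin, ← e1, ← e2]
  -- Taylor remainder bound
  have hfIcc : ContDiffOn ℝ (↑(m - 1 + 1)) f (Set.Icc a b) := by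
    rw [hm1]; exact hf.mono hsub
  obtain ⟨C₁, hC₁⟩ := exists_taylor_mean_remainder_bound (n := m - 1) hab.le hfIcc
  -- the fixed Vandermonde-type matrix
  set W : Matrix (Fin m) (Fin m) ℝ :=
    Matrix.of (fun j k : Fin m => ((j:ℝ))^(k:ℕ) / ((Nat.factorial (k:ℕ) : ℝ))) with hWdef
  have hWdet : IsUnit W.det := isUnit_iff_ne_zero.2 (tv_aux_det m)
  set Cmat : ℝ := (∑ k : Fin m, ∑ j : Fin m, |W⁻¹ k j|) + 1 with hCmatdef
  have hCmatpos : 0 < Cmat := by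
    have : (0:ℝ) ≤ ∑ k : Fin m, ∑ j : Fin m, |W⁻¹ k j| :=
      Finset.sum_nonneg fun k _ => Finset.sum_nonneg fun j _ => abs_nonneg _
    rw [hCmatdef]; linarith
  set C₁' : ℝ := |C₁| + 1 with hC₁'def
  have hC₁'pos : 0 < C₁' := by rw [hC₁'def]; positivity
  have hC₁le : C₁ ≤ C₁' := by
    rw [hC₁'def]; have := le_abs_self C₁; linarith
  set Cr : ℝ := C₁' * (m:ℝ)^m with hCrdef
  have hCrpos : 0 < Cr := mul_pos hC₁'pos (pow_pos hmR m)
  refine ⟨Cmat * Cr, mul_pos hCmatpos hCrpos, (b - a)/m, div_pos (by linarith) hmR, ?_⟩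
  intro h hh hh0 d hd k
  have hmh : (m:ℝ) * h < b - a := by
    have := (lt_div_iff₀ hmR).mp hh0
    linarith
  have hmem : ∀ j : Fin m, a + (j:ℝ)*h ∈ Set.Icc a b := by
    intro j
    have hj0 : (0:ℝ) ≤ (j:ℝ) := Nat.cast_nonneg _
    have hjm : (j:ℝ) ≤ (m:ℝ) := by exact_mod_cast (Nat.le_of_lt j.isLt)
    have h1 : (j:ℝ)*h ≤ (m:ℝ)*h := mul_le_mul_of_nonneg_right hjm hh.le
    have h2 : 0 ≤ (j:ℝ)*h := mul_nonneg hj0 hh.le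
    constructor <;> [linarith; linarith]
  -- bound on the residual
  have hRb : ∀ j : Fin m,
      |f (a + (j:ℝ)*h) - ∑ k : Fin m, ((j:ℝ)*h)^(k:ℕ)/((Nat.factorial (k:ℕ) : ℝ)) *
        iteratedDerivWithin (k:ℕ) f (Set.Ioo α β) a| ≤ Cr * h^m := by
    intro j
    have hT : (∑ k : Fin m, ((j:ℝ)*h)^(k:ℕ)/((Nat.factorial (k:ℕ) : ℝ)) *
        iteratedDerivWithin (k:ℕ) f (Set.Ioo α β) a)
        = taylorWithinEval f (m-1) (Set.Icc a b) a (a + (j:ℝ)*h) := by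
      rw [taylor_within_apply, hm1, ← Fin.sum_univ_eq_sum_range
        (fun k => (((Nat.factorial k : ℝ))⁻¹ * (a + (j:ℝ)*h - a) ^ k) •
          iteratedDerivWithin k f (Set.Icc a b) a) m]
      refine Finset.sum_congr rfl fun k _ => ?_
      rw [smul_eq_mul, hg (k:ℕ) (Nat.le_of_lt k.isLt), add_sub_cancel_left]
      ring
    have h3 := hC₁ _ (hmem j)
    rw [Real.norm_eq_abs, ← hT, hm1, add_sub_cancel_left] at h3
    have hjh : 0 ≤ (j:ℝ)*h := mul_nonneg (Nat.cast_nonneg _) hh.le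
    have hjm : (j:ℝ)*h ≤ (m:ℝ)*h :=
      mul_le_mul_of_nonneg_right (by exact_mod_cast (Nat.le_of_lt j.isLt)) hh.le
    calc |f (a + (j:ℝ)*h) - ∑ k : Fin m, ((j:ℝ)*h)^(k:ℕ)/((Nat.factorial (k:ℕ) : ℝ)) *
          iteratedDerivWithin (k:ℕ) f (Set.Ioo α β) a|
        ≤ C₁ * ((j:ℝ)*h)^m := h3
      _ ≤ C₁' * ((j:ℝ)*h)^m := mul_le_mul_of_nonneg_right hC₁le (pow_nonneg hjh m)
      _ ≤ C₁' * ((m:ℝ)*h)^m := by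
          exact mul_le_mul_of_nonneg_left (pow_le_pow_left₀ hjh hjm m) hC₁'pos.le
      _ = Cr * h^m := by rw [hCrdef, mul_pow]; ring
  -- solve the linear system
  have hWu : W *ᵥ (fun k : Fin m => h^(k:ℕ) *
      (d k - iteratedDerivWithin (k:ℕ) f (Set.Ioo α β) a)) =
      (fun j : Fin m => f (a + (j:ℝ)*h) - ∑ k : Fin m,
        ((j:ℝ)*h)^(k:ℕ)/((Nat.factorial (k:ℕ) : ℝ)) *
          iteratedDerivWithin (k:ℕ) f (Set.Ioo α β) a) := by
    funext j
    simp only [Matrix.mulVec, dotProduct, hWdef, Matrix.of_apply]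
    rw [← hd j, ← Finset.sum_sub_distrib]
    refine Finset.sum_congr rfl fun i _ => ?_
    rw [mul_pow]; ring
  have hu : (fun k : Fin m => h^(k:ℕ) *
      (d k - iteratedDerivWithin (k:ℕ) f (Set.Ioo α β) a)) =
      W⁻¹ *ᵥ (fun j : Fin m => f (a + (j:ℝ)*h) - ∑ k : Fin m,
        ((j:ℝ)*h)^(k:ℕ)/((Nat.factorial (k:ℕ) : ℝ)) *
          iteratedDerivWithin (k:ℕ) f (Set.Ioo α β) a) := by
    rw [← hWu, Matrix.mulVec_mulVec, Matrix.nonsing_inv_mul W hWdet, Matrix.one_mulVec]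
  have hub : |h^(k:ℕ) * (d k - iteratedDerivWithin (k:ℕ) f (Set.Ioo α β) a)|
      ≤ Cmat * (Cr * h^m) := by
    rw [congrFun hu k]
    calc |(W⁻¹ *ᵥ _) k| = |∑ j : Fin m, W⁻¹ k j *
          (f (a + (j:ℝ)*h) - ∑ i : Fin m, ((j:ℝ)*h)^(i:ℕ)/((Nat.factorial (i:ℕ) : ℝ)) *
            iteratedDerivWithin (i:ℕ) f (Set.Ioo α β) a)| := by
          simp [Matrix.mulVec, dotProduct]
      _ ≤ ∑ j : Fin m, |W⁻¹ k j *
          (f (a + (j:ℝ)*h) - ∑ i : Fin m, ((j:ℝ)*h)^(i:ℕ)/((Nat.factorial (i:ℕ) : ℝ)) *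
            iteratedDerivWithin (i:ℕ) f (Set.Ioo α β) a)| :=
          Finset.abs_sum_le_sum_abs _ _
      _ ≤ ∑ j : Fin m, |W⁻¹ k j| * (Cr * h^m) := by
          refine Finset.sum_le_sum fun j _ => ?_
          rw [abs_mul]
          exact mul_le_mul_of_nonneg_left (hRb j) (abs_nonneg _)
      _ = (∑ j : Fin m, |W⁻¹ k j|) * (Cr * h^m) := by rw [← Finset.sum_mul]
      _ ≤ Cmat * (Cr * h^m) := by
          refine mul_le_mul_of_nonneg_right ?_ (by positivity)
          have hsingle := Finset.single_le_sum
            (f := fun k : Fin m => ∑ j : Fin m, |W⁻¹ k j|)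
            (fun i _ => Finset.sum_nonneg fun j _ => abs_nonneg _) (Finset.mem_univ k)
          rw [hCmatdef]; linarith
  have hpk : (0:ℝ) < h^(k:ℕ) := pow_pos hh _
  rw [abs_mul, abs_of_pos hpk, mul_comm] at hub
  have hms : m - (k:ℕ) + (k:ℕ) = m := Nat.sub_add_cancel (Nat.le_of_lt k.isLt)
  have hpow : h^m = h^(m-(k:ℕ)) * h^(k:ℕ) := by rw [← pow_add, hms]
  have heq : Cmat * (Cr * h^m) = (Cmat * Cr * h^(m-(k:ℕ))) * h^(k:ℕ) := by
    rw [hpow]; ring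
  rw [heq] at hub
  exact (mul_le_mul_iff_of_pos_right hpk).mp hub
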